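/- Let β > 1 and let m = m(β) ∈ (0,1) be the unique strictly positive solution of tanh(βm) = m. Then the derivative F'_β is strictly negative on (0,m) and strictly positive on (m,1) (equivalently, F_β is strictly decreasing on [0,m] and strictly increasing on [m,1)), and the second derivative satisfies F''_β(m) > 0. -/

import Mathlib

/-- The function `F_β`. -/
noncomputable def Fbeta (β t : ℝ) : ℝ :=
  1 / β * (1 / 2 * Real.log ((1 + t) / (1 - t))) ^ 2 + Real.log (1 - t ^ 2)

open Set

/-- Derivative of artanh written via log. -/
lemma hasDerivAt_atanh {t : ℝ} (ht : t ∈ Set.Ioo (-1:ℝ) 1) :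
    HasDerivAt (fun t : ℝ => 1 / 2 * Real.log ((1 + t) / (1 - t))) (1 / (1 - t ^ 2)) t := by
  obtain ⟨h1, h2⟩ := ht
  have h1p : (0:ℝ) < 1 + t := by linarith
  have h2p : (0:ℝ) < 1 - t := by linarith
  have key : HasDerivAt (fun t : ℝ => 1 / 2 * (Real.log (1 + t) - Real.log (1 - t)))
      (1 / (1 - t ^ 2)) t := by
    have d1 : HasDerivAt (fun t : ℝ => 1 + t) 1 t := (hasDerivAt_id t).const_add 1
    have d2 : HasDerivAt (fun t : ℝ => 1 - t) (-1) t := (hasDerivAt_id t).const_sub 1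
    have l1 := d1.log h1p.ne'
    have l2 := d2.log h2p.ne'
    have h := (l1.sub l2).const_mul (1/2 : ℝ)
    have h1t2 : (0:ℝ) < 1 - t ^ 2 := by nlinarith
    refine h.congr_deriv ?_
    field_simp [h1t2.ne', h1p.ne', h2p.ne']
    ring
  refine key.congr_of_eventuallyEq ?_
  filter_upwards [isOpen_Ioo.mem_nhds (⟨h1, h2⟩ : t ∈ Set.Ioo (-1:ℝ) 1)] with x hx
  rw [Real.log_div (by linarith [hx.1]) (by linarith [hx.2])]

lemma hasDerivAt_Fbeta {β t : ℝ} (hβ : 0 < β) (ht : t ∈ Set.Ioo (-1:ℝ) 1) :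
    HasDerivAt (Fbeta β)
      (2 / (β * (1 - t ^ 2)) * (1 / 2 * Real.log ((1 + t) / (1 - t)) - β * t)) t := by
  have ht2 : t ^ 2 < 1 := by nlinarith [ht.1, ht.2]
  have h1t2 : (0:ℝ) < 1 - t ^ 2 := by linarith
  have hA := hasDerivAt_atanh ht
  have hsq := (hA.pow 2).const_mul (1/β : ℝ)
  have dp : HasDerivAt (fun t : ℝ => 1 - t ^ 2) (-(2 * t)) t := by
    simpa using (hasDerivAt_pow 2 t).const_sub 1
  have hlog := dp.log h1t2.ne'
  have h := hsq.add hlog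
  unfold Fbeta
  refine h.congr_deriv ?_
  have h1p : (0:ℝ) < 1 + t := by linarith [ht.1]
  have h2p : (0:ℝ) < 1 - t := by linarith [ht.2]
  field_simp [hβ.ne', h1t2.ne', h1p.ne', h2p.ne']
  ring

/-- For `β > 1`, with `m ∈ (0,1)` the strictly positive solution of `tanh (βm) = m`:
`F_β' < 0` on `(0,m)`, `F_β' > 0` on `(m,1)`, and `F_β''(m) > 0`. -/
theorem Fbeta_monotonicity (β m : ℝ) (hβ : 1 < β) (hm : 0 < m) (hm1 : m < 1)
    (htanh : Real.tanh (β * m) = m) :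
    (∀ t ∈ Set.Ioo 0 m, deriv (Fbeta β) t < 0) ∧
      (∀ t ∈ Set.Ioo m 1, 0 < deriv (Fbeta β) t) ∧
      0 < deriv (deriv (Fbeta β)) m := by
  have hβ0 : (0:ℝ) < β := by linarith
  set g : ℝ → ℝ := fun t => 1 / 2 * Real.log ((1 + t) / (1 - t)) - β * t with hgdef
  -- artanh m = β m
  have hAm : 1 / 2 * Real.log ((1 + m) / (1 - m)) = β * m := by
    have h : (1 + Real.sinh (β * m) / Real.cosh (β * m)) /
        (1 - Real.sinh (β * m) / Real.cosh (β * m)) = Real.exp (2 * (β * m)) := by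
      rw [Real.sinh_eq, Real.cosh_eq]
      have hE := Real.exp_pos (β * m)
      have hE' := Real.exp_pos (-(β * m))
      have h2 : Real.exp (2 * (β * m)) = Real.exp (β * m) / Real.exp (-(β * m)) := by
        rw [← Real.exp_sub]; ring_nf
      rw [h2]
      field_simp
      ring
    conv_lhs => rw [← htanh]
    rw [Real.tanh_eq_sinh_div_cosh, h, Real.log_exp]
    ring
  have hgm : g m = 0 := by
    simp only [hgdef]
    linarith [hAm]
  have hg0 : g 0 = 0 := by simp [hgdef]
  -- derivative of g
  have hgderiv : ∀ t ∈ Set.Ioo (-1:ℝ) 1, HasDerivAt g (1 / (1 - t ^ 2) - β) t := by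
    intro t ht
    have h := (hasDerivAt_atanh ht).sub ((hasDerivAt_id t).const_mul β)
    exact h.congr_deriv (by ring)
  -- g is strictly convex on [0,1)
  have hconv : StrictConvexOn ℝ (Set.Ico (0:ℝ) 1) g := by
    apply StrictMonoOn.strictConvexOn_of_deriv (convex_Ico 0 1)
    · intro t ht
      exact (hgderiv t ⟨by linarith [ht.1], ht.2⟩).continuousAt.continuousWithinAt
    · rw [interior_Ico]
      intro a ha b hb hab
      rw [(hgderiv a ⟨by linarith [ha.1], ha.2⟩).deriv,
        (hgderiv b ⟨by linarith [hb.1], hb.2⟩).deriv]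
      have h1 : (0:ℝ) < 1 - a ^ 2 := by nlinarith [ha.1, ha.2]
      have h2 : (0:ℝ) < 1 - b ^ 2 := by nlinarith [hb.1, hb.2]
      have : 1 - b ^ 2 < 1 - a ^ 2 := by nlinarith [ha.1]
      have := one_div_lt_one_div_of_lt h2 this
      linarith
  -- g < 0 on (0,m)
  have hneg : ∀ t ∈ Set.Ioo (0:ℝ) m, g t < 0 := by
    intro t ht
    have hb : 0 < t / m := div_pos ht.1 hm
    have ha : 0 < 1 - t / m := by
      have : t / m < 1 := (div_lt_one hm).2 ht.2
      linarith
    have h := hconv.2 (Set.mem_Ico.2 ⟨le_refl 0, one_pos⟩)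
      (Set.mem_Ico.2 ⟨hm.le, hm1⟩) hm.ne ha hb (by ring)
    have heq : (1 - t / m) • (0:ℝ) + (t / m) • m = t := by
      rw [smul_eq_mul, smul_eq_mul]
      field_simp
      ring
    rw [heq] at h
    simp only [smul_eq_mul, hg0, hgm, mul_zero] at h
    linarith
  -- g > 0 on (m,1)
  have hpos : ∀ t ∈ Set.Ioo m (1:ℝ), 0 < g t := by
    intro t ht
    have htpos : 0 < t := lt_trans hm ht.1
    have hb : 0 < m / t := div_pos hm htpos
    have ha : 0 < 1 - m / t := by
      have : m / t < 1 := (div_lt_one htpos).2 ht.1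
      linarith
    have h := hconv.2 (Set.mem_Ico.2 ⟨le_refl 0, one_pos⟩)
      (Set.mem_Ico.2 ⟨htpos.le, ht.2⟩) htpos.ne ha hb (by ring)
    have heq : (1 - m / t) • (0:ℝ) + (m / t) • t = m := by
      rw [smul_eq_mul, smul_eq_mul]
      field_simp
      ring
    rw [heq, hgm] at h
    simp only [smul_eq_mul, hg0, mul_zero, zero_add] at h
    rcases mul_pos_iff.1 h with ⟨_, h2⟩ | ⟨h1, _⟩
    · exact h2
    · linarith
  -- β (1 - m²) < 1
  have hβm : β * (1 - m ^ 2) < 1 := by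
    have hcont : ContinuousOn g (Set.Icc 0 m) := by
      intro t ht
      exact (hgderiv t ⟨by linarith [ht.1], by linarith [ht.2]⟩).continuousAt.continuousWithinAt
    obtain ⟨c, hc, hdc⟩ := exists_deriv_eq_zero hm hcont (hg0.trans hgm.symm)
    have hcIoo : c ∈ Set.Ioo (-1:ℝ) 1 := ⟨by linarith [hc.1], by linarith [hc.2]⟩
    rw [(hgderiv c hcIoo).deriv] at hdc
    have h1c : (0:ℝ) < 1 - c ^ 2 := by nlinarith [hc.1, hc.2]
    have hβc : β * (1 - c ^ 2) = 1 := by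
      field_simp at hdc
      linarith
    nlinarith [hc.1, hc.2, mul_pos (mul_pos hβ0 (sub_pos.2 hc.2)) (by linarith [hc.1] : (0:ℝ) < m + c)]
  have h1m2 : (0:ℝ) < 1 - m ^ 2 := by nlinarith
  -- derivative formula
  have hF : ∀ t ∈ Set.Ioo (-1:ℝ) 1, deriv (Fbeta β) t = 2 / (β * (1 - t ^ 2)) * g t :=
    fun t ht => (hasDerivAt_Fbeta hβ0 ht).deriv
  refine ⟨?_, ?_, ?_⟩
  · intro t ht
    have htI : t ∈ Set.Ioo (-1:ℝ) 1 := ⟨by linarith [ht.1], by linarith [ht.2]⟩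
    rw [hF t htI]
    have h1t2 : (0:ℝ) < 1 - t ^ 2 := by nlinarith [htI.1, htI.2]
    exact mul_neg_of_pos_of_neg (by positivity) (hneg t ht)
  · intro t ht
    have htI : t ∈ Set.Ioo (-1:ℝ) 1 := ⟨by linarith [ht.1], ht.2⟩
    rw [hF t htI]
    have h1t2 : (0:ℝ) < 1 - t ^ 2 := by nlinarith [htI.1, htI.2]
    exact mul_pos (by positivity) (hpos t ht)
  · -- second derivative
    have hEv : deriv (Fbeta β) =ᶠ[nhds m] fun t => 2 / (β * (1 - t ^ 2)) * g t := by
      filter_upwards [isOpen_Ioo.mem_nhds (⟨by linarith, hm1⟩ : m ∈ Set.Ioo (-1:ℝ) 1)] with x hx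
      exact hF x hx
    rw [hEv.deriv_eq]
    have hden : HasDerivAt (fun t : ℝ => β * (1 - t ^ 2)) (β * (-(2 * m))) m := by
      have : HasDerivAt (fun t : ℝ => 1 - t ^ 2) (-(2 * m)) m := by
        simpa using (hasDerivAt_pow 2 m).const_sub 1
      simpa [mul_comm] using this.const_mul β
    have hdenne : β * (1 - m ^ 2) ≠ 0 := by positivity
    have hh := (hasDerivAt_const m (2:ℝ)).div hden hdenne
    have hgm' : HasDerivAt g (1 / (1 - m ^ 2) - β) m :=
      hgderiv m ⟨by linarith, hm1⟩
    have hprod := hh.mul hgm'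
    change 0 < deriv (((fun x => (2:ℝ)) / fun t => β * (1 - t ^ 2)) * g) m
    rw [hprod.deriv, hgm, mul_zero, zero_add]
    simp only [Pi.div_apply]
    have hfac : 0 < 1 / (1 - m ^ 2) - β := by
      have := (lt_div_iff₀ h1m2).2 (by linarith : β * (1 - m ^ 2) < 1)
      linarith
    positivity
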